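/- (Uniqueness of the compatibility constant, comparison form.) Suppose v¹, v² ∈ C²(ℝⁿ \ T) are bounded periodic functions and γ¹, γ² ∈ ℝ satisfy: a_{ij}(y) D_{ij}v^k(y) = f(y) in ℝⁿ \ T and b^i(y)(ξ^i + D_i v^k(y)) + γ^k = g(y) on ∂T, for k = 1,2, where (a_{ij}) is uniformly elliptic, the domain complement of the periodic hole set T is connected, and the strong maximum principle and Hopf boundary lemma hold for the operator a_{ij}D_{ij}. Then γ¹ = γ². -/

import Mathlib

/-- Second partial derivative `D_{ij} v (y)`. -/
noncomputable def sd {n : ℕ} (v : (Fin n → ℝ) → ℝ) (y : Fin n → ℝ) (i j : Fin n) : ℝ :=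
  fderiv ℝ (fun z => fderiv ℝ v z (Pi.single j (1 : ℝ))) y (Pi.single i (1 : ℝ))

/-- The complement of the closed periodic hole set `T̄ = ⋃_{m∈ℤⁿ} B̄_𝔞(m)`. -/
def Dom (n : ℕ) (𝔞 : ℝ) : Set (Fin n → ℝ) :=
  {y | ∀ m : Fin n → ℤ, 𝔞 ^ 2 < ∑ i, (y i - (m i : ℝ)) ^ 2}

/-- The boundary `∂T` of the periodic hole set. -/
def Bdy (n : ℕ) (𝔞 : ℝ) : Set (Fin n → ℝ) :=
  {y | (∃ m : Fin n → ℤ, (∑ i, (y i - (m i : ℝ)) ^ 2) = 𝔞 ^ 2) ∧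
    ∀ m : Fin n → ℤ, 𝔞 ^ 2 ≤ ∑ i, (y i - (m i : ℝ)) ^ 2}

namespace Stmt3Aux
open Filter Set Topology Finset

variable {n : ℕ}

/-- The closed set `Dom ∪ Bdy`. -/
def K (n : ℕ) (𝔞 : ℝ) : Set (Fin n → ℝ) :=
  {y | ∀ m : Fin n → ℤ, 𝔞 ^ 2 ≤ ∑ i, (y i - (m i : ℝ)) ^ 2}

lemma K_union (𝔞 : ℝ) : Dom n 𝔞 ∪ Bdy n 𝔞 = K n 𝔞 := by
  ext y
  constructor
  · rintro (h | h)
    · exact fun m => (h m).le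
    · exact h.2
  · intro h
    by_cases hD : y ∈ Dom n 𝔞
    · exact Or.inl hD
    · right
      simp only [Dom, Set.mem_setOf_eq, not_forall, not_lt] at hD
      obtain ⟨m, hm⟩ := hD
      exact ⟨⟨m, le_antisymm hm (h m)⟩, h⟩

lemma K_closed (𝔞 : ℝ) : IsClosed (K n 𝔞) := by
  have : K n 𝔞 = ⋂ m : Fin n → ℤ, {y | 𝔞 ^ 2 ≤ ∑ i, (y i - (m i : ℝ)) ^ 2} := by
    ext y; simp [K, Set.mem_iInter]
  rw [this]
  exact isClosed_iInter fun m => isClosed_le continuous_const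
    (continuous_finset_sum _ fun i _ => ((continuous_apply i).sub continuous_const).pow 2)

lemma K_shift {𝔞 : ℝ} {y : Fin n → ℝ} (hy : y ∈ K n 𝔞) (m : Fin n → ℤ) :
    (fun i => y i + (m i : ℝ)) ∈ K n 𝔞 := by
  intro m'
  refine le_of_le_of_eq (hy (fun i => m' i - m i)) ?_
  refine Finset.sum_congr rfl fun i _ => ?_
  push_cast; ring

lemma exists_max (𝔞 : ℝ) (w : (Fin n → ℝ) → ℝ) (hw : Continuous w)
    (hper : ∀ (m : Fin n → ℤ) (y : Fin n → ℝ), w (fun i => y i + (m i : ℝ)) = w y)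
    (hne : (K n 𝔞).Nonempty) :
    ∃ y₀ ∈ K n 𝔞, ∀ y ∈ K n 𝔞, w y ≤ w y₀ := by
  set K₀ := K n 𝔞 ∩ Icc (0 : Fin n → ℝ) 1 with hK₀
  have hred : ∀ y ∈ K n 𝔞, ∃ z ∈ K₀, w z = w y := by
    intro y hy
    refine ⟨fun i => Int.fract (y i), ⟨?_, ?_, ?_⟩, ?_⟩
    · have := K_shift hy (fun i => -⌊y i⌋)
      convert this using 1
      funext i; push_cast; simp only [Int.fract]; ring
    · intro i; exact Int.fract_nonneg _
    · intro i; exact (Int.fract_lt_one _).le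
    · have := hper (fun i => ⌊y i⌋) (fun i => Int.fract (y i))
      rw [← this]; congr 1; funext i; simp only [Int.fract]; ring
  have hK₀c : IsCompact K₀ := isCompact_Icc.inter_left (K_closed 𝔞)
  obtain ⟨y, hyK⟩ := hne
  obtain ⟨z, hzK₀, _⟩ := hred y hyK
  obtain ⟨x, hxK₀, hxmax⟩ := hK₀c.exists_isMaxOn ⟨z, hzK₀⟩ hw.continuousOn
  refine ⟨x, hxK₀.1, fun y' hy' => ?_⟩
  obtain ⟨z', hz'K₀, hz'w⟩ := hred y' hy'
  rw [← hz'w]; exact hxmax hz'K₀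

lemma int_far {𝔞 : ℝ} (ha : 0 < 𝔞) (ha2 : 𝔞 < 1/2) {x d : ℝ}
    (hx : x ^ 2 ≤ 𝔞 ^ 2) (hd : 1 ≤ |d|) : 𝔞 ^ 2 ≤ (x + d) ^ 2 := by
  have hx' : |x| ≤ 𝔞 := by nlinarith [sq_abs x, abs_nonneg x]
  obtain ⟨hxl, hxr⟩ := abs_le.mp hx'
  rcases le_or_gt 1 d with h | h
  · nlinarith [mul_nonneg (by linarith : (0:ℝ) ≤ x + d - (1 - 𝔞))
      (by linarith : (0:ℝ) ≤ x + d + (1 - 𝔞))]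
  · have hd' : d ≤ -1 := by
      rcases abs_cases d with ⟨h1, _⟩ | ⟨h1, _⟩ <;> linarith
    nlinarith [mul_nonneg (by linarith : (0:ℝ) ≤ -(x + d) - (1 - 𝔞))
      (by linarith : (0:ℝ) ≤ -(x + d) + (1 - 𝔞))]

lemma sphere_subset_K {𝔞 : ℝ} (ha : 0 < 𝔞) (ha2 : 𝔞 < 1/2) (m : Fin n → ℤ)
    {y : Fin n → ℝ} (hy : ∑ i, (y i - (m i : ℝ)) ^ 2 = 𝔞 ^ 2) : y ∈ K n 𝔞 := by
  intro m'
  by_cases h : m' = m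
  · exact (h ▸ hy).ge
  · obtain ⟨i, hi⟩ : ∃ i, m' i ≠ m i := by
      by_contra hc; push_neg at hc; exact h (funext hc)
    have h1 : (y i - (m i : ℝ)) ^ 2 ≤ 𝔞 ^ 2 := by
      rw [← hy]
      exact Finset.single_le_sum (f := fun j => (y j - (m j : ℝ)) ^ 2)
        (fun j _ => sq_nonneg _) (mem_univ i)
    have hd : (1 : ℝ) ≤ |((m i : ℝ) - (m' i : ℝ))| := by
      have : m i - m' i ≠ 0 := sub_ne_zero.mpr (Ne.symm hi)
      have h2 : (1 : ℤ) ≤ |m i - m' i| := Int.one_le_abs this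
      calc (1:ℝ) ≤ ((|m i - m' i| : ℤ) : ℝ) := by exact_mod_cast h2
        _ = |((m i : ℝ) - (m' i : ℝ))| := by push_cast [Int.cast_abs]; ring_nf
    have key : 𝔞 ^ 2 ≤ (y i - (m' i : ℝ)) ^ 2 := by
      have := int_far ha ha2 h1 hd
      convert this using 2; ring
    calc 𝔞 ^ 2 ≤ (y i - (m' i : ℝ)) ^ 2 := key
      _ ≤ ∑ j, (y j - (m' j : ℝ)) ^ 2 :=
        Finset.single_le_sum (f := fun j => (y j - (m' j : ℝ)) ^ 2)
          (fun j _ => sq_nonneg _) (mem_univ i)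

section Derivs
variable {v1 v2 : (Fin n → ℝ) → ℝ}

lemma fderiv_sub' (hC1 : ContDiff ℝ 2 v1) (hC2 : ContDiff ℝ 2 v2) (y : Fin n → ℝ) :
    fderiv ℝ (fun z => v1 z - v2 z) y = fderiv ℝ v1 y - fderiv ℝ v2 y :=
  fderiv_sub ((hC1.differentiable (by norm_num)).differentiableAt)
    ((hC2.differentiable (by norm_num)).differentiableAt)

lemma contDiff_fderiv_apply (hC1 : ContDiff ℝ 2 v1) (j : Fin n) :
    ContDiff ℝ 1 (fun z => fderiv ℝ v1 z (Pi.single j (1:ℝ))) :=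
  (hC1.fderiv_right (by norm_num)).clm_apply contDiff_const

lemma sd_sub (hC1 : ContDiff ℝ 2 v1) (hC2 : ContDiff ℝ 2 v2) (y : Fin n → ℝ) (i j : Fin n) :
    sd (fun z => v1 z - v2 z) y i j = sd v1 y i j - sd v2 y i j := by
  unfold sd
  have heq : (fun z => fderiv ℝ (fun z => v1 z - v2 z) z (Pi.single j (1:ℝ)))
      = fun z => fderiv ℝ v1 z (Pi.single j (1:ℝ)) - fderiv ℝ v2 z (Pi.single j (1:ℝ)) := by
    funext z; rw [fderiv_sub' hC1 hC2 z]; rfl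
  rw [heq, fderiv_fun_sub (((contDiff_fderiv_apply hC1 j).differentiable one_ne_zero).differentiableAt)
    (((contDiff_fderiv_apply hC2 j).differentiable one_ne_zero).differentiableAt)]
  rfl

end Derivs

/-- The gradient of `y ↦ ∑ (y i - c i)²` as a continuous linear map. -/
noncomputable def gradq (c : Fin n → ℝ) (y₀ : Fin n → ℝ) : (Fin n → ℝ) →L[ℝ] ℝ :=
  ∑ i, (2 * (y₀ i - c i)) • (ContinuousLinearMap.proj i : (Fin n → ℝ) →L[ℝ] ℝ)

lemma gradq_apply (c y₀ u : Fin n → ℝ) :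
    gradq c y₀ u = ∑ i, 2 * (y₀ i - c i) * u i := by
  simp [gradq, ContinuousLinearMap.sum_apply, mul_comm]

lemma hasStrict_q (c y₀ : Fin n → ℝ) :
    HasStrictFDerivAt (fun y => ∑ i, (y i - c i) ^ 2) (gradq c y₀) y₀ := by
  have h : ∀ i ∈ Finset.univ, HasStrictFDerivAt (fun y : Fin n → ℝ => (y i - c i) ^ 2)
      ((2 * (y₀ i - c i)) • (ContinuousLinearMap.proj i : (Fin n → ℝ) →L[ℝ] ℝ)) y₀ := by
    intro i _
    have hp : HasStrictFDerivAt (fun y : Fin n → ℝ => y i - c i)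
        (ContinuousLinearMap.proj i : (Fin n → ℝ) →L[ℝ] ℝ) y₀ := by
      have := ((ContinuousLinearMap.proj i : (Fin n → ℝ) →L[ℝ] ℝ).hasStrictFDerivAt
        (x := y₀)).sub_const (c i)
      simpa only [ContinuousLinearMap.proj_apply] using this
    have : HasStrictFDerivAt (fun y : Fin n → ℝ => (y i - c i) * (y i - c i))
        ((y₀ i - c i) • (ContinuousLinearMap.proj i : (Fin n → ℝ) →L[ℝ] ℝ)
          + (y₀ i - c i) • (ContinuousLinearMap.proj i : (Fin n → ℝ) →L[ℝ] ℝ)) y₀ :=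
      hp.fun_mul hp
    convert this using 1
    · funext y; ring
    · simp [two_mul, add_smul, smul_smul]
  exact HasStrictFDerivAt.fun_sum h

/-- Key lemma: if `w` solves the homogeneous problem, is not constant on the domain,
and `∑ b·Dw = δ` on the boundary, then `0 < δ`. -/
lemma key (𝔞 μ δ : ℝ) (ha : 0 < 𝔞) (ha2 : 𝔞 < 1/2) (hμ : 0 < μ)
    (a : (Fin n → ℝ) → Fin n → Fin n → ℝ) (b : (Fin n → ℝ) → (Fin n → ℝ))
    (hobl : ∀ y ∈ Bdy n 𝔞, ∀ m : Fin n → ℤ,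
      (∑ i, (y i - (m i : ℝ)) ^ 2) = 𝔞 ^ 2 →
      μ ≤ ∑ i, b y i * (((m i : ℝ) - y i) / 𝔞))
    (w : (Fin n → ℝ) → ℝ) (hCw : ContDiff ℝ 2 w)
    (hperw : ∀ (m : Fin n → ℤ) (y : Fin n → ℝ), w (fun i => y i + (m i : ℝ)) = w y)
    (hint0 : ∀ y ∈ Dom n 𝔞, (∑ i, ∑ j, a y i j * sd w y i j) = 0)
    (hSMP : (∀ y ∈ Dom n 𝔞, (∑ i, ∑ j, a y i j * sd w y i j) = 0) →
      ∀ y₀ ∈ Dom n 𝔞, (∀ y ∈ Dom n 𝔞, w y ≤ w y₀) → ∀ y ∈ Dom n 𝔞, w y = w y₀)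
    (hHopf : (∀ y ∈ Dom n 𝔞, (∑ i, ∑ j, a y i j * sd w y i j) = 0) →
      ∀ y₀ ∈ Bdy n 𝔞, (∀ y ∈ Dom n 𝔞 ∪ Bdy n 𝔞, w y ≤ w y₀) →
      (¬ ∀ y ∈ Dom n 𝔞, w y = w y₀) →
      ∀ m : Fin n → ℤ, (∑ i, (y₀ i - (m i : ℝ)) ^ 2) = 𝔞 ^ 2 →
      0 < ∑ i, fderiv ℝ w y₀ (Pi.single i (1 : ℝ)) * (((m i : ℝ) - y₀ i) / 𝔞))
    (hnc : ¬ ∃ c, ∀ y ∈ Dom n 𝔞, w y = c)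
    (hKne : (K n 𝔞).Nonempty)
    (hb : ∀ y ∈ Bdy n 𝔞, ∑ i, b y i * fderiv ℝ w y (Pi.single i (1:ℝ)) = δ) :
    0 < δ := by
  obtain ⟨y₀, hy₀K, hmax⟩ := exists_max 𝔞 w hCw.continuous hperw hKne
  have hy₀ : y₀ ∈ Bdy n 𝔞 := by
    have h1 : y₀ ∈ Dom n 𝔞 ∪ Bdy n 𝔞 := (K_union 𝔞) ▸ hy₀K
    rcases h1 with h | h
    · exfalso
      exact hnc ⟨w y₀, hSMP hint0 y₀ h (fun y hy => hmax y ((K_union 𝔞) ▸ Or.inl hy))⟩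
    · exact h
  obtain ⟨m, hm⟩ := hy₀.1
  have hmaxU : ∀ y ∈ Dom n 𝔞 ∪ Bdy n 𝔞, w y ≤ w y₀ := by
    intro y hy; exact hmax y ((K_union 𝔞) ▸ hy)
  have hnc' : ¬ ∀ y ∈ Dom n 𝔞, w y = w y₀ := fun h => hnc ⟨w y₀, h⟩
  have hHopf' := hHopf hint0 y₀ hy₀ hmaxU hnc' m hm
  -- Lagrange multipliers at the boundary maximum
  set φ : (Fin n → ℝ) → ℝ := fun y => ∑ i, (y i - (m i : ℝ)) ^ 2 with hφ
  have hextr : IsLocalExtrOn w {x | φ x = φ y₀} y₀ := by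
    refine Or.inr (IsMaxOn.localize ?_)
    intro x hx
    exact hmax x (sphere_subset_K ha ha2 m (hx.trans hm))
  have hwstrict : HasStrictFDerivAt w (fderiv ℝ w y₀) y₀ :=
    hCw.hasStrictFDerivAt (by norm_num)
  obtain ⟨a₀, b₀, hab, heq⟩ :=
    hextr.exists_multipliers_of_hasStrictFDerivAt_1d (hasStrict_q (fun i => (m i : ℝ)) y₀)
      hwstrict
  have hb₀ : b₀ ≠ 0 := by
    rintro rfl
    have ha₀ : a₀ ≠ 0 := by
      intro ha₀; apply hab; simp [ha₀]
    have hg0 : gradq (fun i => (m i : ℝ)) y₀ = 0 := by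
      have h := heq
      rw [zero_smul, add_zero] at h
      exact (smul_eq_zero.mp h).resolve_left ha₀
    have h2 : gradq (fun i => (m i : ℝ)) y₀ (fun i => y₀ i - (m i : ℝ)) = 0 := by
      rw [hg0]; rfl
    rw [gradq_apply] at h2
    have h3 : ∑ i, 2 * (y₀ i - (m i:ℝ)) * (y₀ i - (m i:ℝ)) = 2 * 𝔞^2 := by
      rw [← hm, Finset.mul_sum]
      exact Finset.sum_congr rfl fun i _ => by ring
    rw [h3] at h2
    nlinarith
  set t : ℝ := -a₀ / b₀ with ht
  have hDw : ∀ u, fderiv ℝ w y₀ u = t * gradq (fun i => (m i : ℝ)) y₀ u := by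
    intro u
    have h1 := congrFun (congrArg DFunLike.coe heq) u
    simp only [ContinuousLinearMap.add_apply, ContinuousLinearMap.smul_apply,
      ContinuousLinearMap.zero_apply, smul_eq_mul] at h1
    rw [ht, div_mul_eq_mul_div, eq_div_iff hb₀]
    linarith
  have hgrad_single : ∀ i, gradq (fun i => (m i : ℝ)) y₀ (Pi.single i (1:ℝ))
      = 2 * (y₀ i - (m i : ℝ)) := by
    intro i
    rw [gradq_apply]
    rw [Finset.sum_eq_single i]
    · simp
    · intro j _ hj; simp [Pi.single_apply, hj]
    · simp
  have hhopfsum : ∑ i, fderiv ℝ w y₀ (Pi.single i (1:ℝ)) * (((m i:ℝ) - y₀ i)/𝔞)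
      = -2 * 𝔞 * t := by
    have hterm : ∀ i, fderiv ℝ w y₀ (Pi.single i (1:ℝ)) * (((m i:ℝ) - y₀ i)/𝔞)
        = (t * (-2/𝔞)) * (y₀ i - (m i:ℝ))^2 := by
      intro i
      rw [hDw, hgrad_single]
      field_simp
      ring
    rw [Finset.sum_congr rfl fun i _ => hterm i, ← Finset.mul_sum, hm]
    field_simp
  have ht0 : t < 0 := by
    rw [hhopfsum] at hHopf'
    nlinarith
  have hδ : δ = ∑ i, b y₀ i * fderiv ℝ w y₀ (Pi.single i (1:ℝ)) := (hb y₀ hy₀).symm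
  have hδ2 : δ = (-2 * 𝔞 * t) * ∑ i, b y₀ i * (((m i:ℝ) - y₀ i)/𝔞) := by
    rw [hδ, Finset.mul_sum]
    refine Finset.sum_congr rfl fun i _ => ?_
    rw [hDw, hgrad_single]
    field_simp
    ring
  have hobl' := hobl y₀ hy₀ m hm
  have hpos : 0 < -2 * 𝔞 * t := by nlinarith
  rw [hδ2]
  calc (0:ℝ) < (-2 * 𝔞 * t) * μ := by positivity
    _ ≤ (-2 * 𝔞 * t) * ∑ i, b y₀ i * (((m i:ℝ) - y₀ i)/𝔞) :=
      mul_le_mul_of_nonneg_left hobl' hpos.le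

end Stmt3Aux

open Filter Topology Stmt3Aux

/-- Uniqueness of the compatibility constant (comparison form).  If `v¹, v²` are bounded
`C²` periodic solutions of `a_{ij}D_{ij}v = f` in `ℝⁿ \ T`,
`b·(ξ + Dv) + γ^k = g` on `∂T`, where `a` is uniformly elliptic, `b` is uniformly
oblique, `ℝⁿ \ T̄` is connected, and the strong maximum principle and Hopf boundary
lemma hold for the operator `a_{ij}D_{ij}`, then `γ¹ = γ²`. -/
theorem stmt3 (n : ℕ) (𝔞 lam Lam μ : ℝ) (ha : 0 < 𝔞) (ha2 : 𝔞 < 1 / 2)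
    (hlam : 0 < lam) (hLL : lam ≤ Lam) (hμ : 0 < μ)
    (a : (Fin n → ℝ) → Fin n → Fin n → ℝ) (b : (Fin n → ℝ) → (Fin n → ℝ))
    (f g : (Fin n → ℝ) → ℝ) (ξ : Fin n → ℝ)
    (hell : ∀ (y ξ' : Fin n → ℝ),
      lam * ∑ i, ξ' i ^ 2 ≤ (∑ i, ∑ j, a y i j * ξ' i * ξ' j) ∧
      (∑ i, ∑ j, a y i j * ξ' i * ξ' j) ≤ Lam * ∑ i, ξ' i ^ 2)
    (hobl : ∀ y ∈ Bdy n 𝔞, ∀ m : Fin n → ℤ,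
      (∑ i, (y i - (m i : ℝ)) ^ 2) = 𝔞 ^ 2 →
      μ ≤ ∑ i, b y i * (((m i : ℝ) - y i) / 𝔞))
    (hconn : IsConnected (Dom n 𝔞))
    (v1 v2 : (Fin n → ℝ) → ℝ) (γ1 γ2 : ℝ)
    (hC1 : ContDiff ℝ 2 v1) (hC2 : ContDiff ℝ 2 v2)
    (hbd1 : ∃ C, ∀ y, |v1 y| ≤ C) (hbd2 : ∃ C, ∀ y, |v2 y| ≤ C)
    (hper1 : ∀ (m : Fin n → ℤ) (y : Fin n → ℝ), v1 (fun i => y i + (m i : ℝ)) = v1 y)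
    (hper2 : ∀ (m : Fin n → ℤ) (y : Fin n → ℝ), v2 (fun i => y i + (m i : ℝ)) = v2 y)
    (hint1 : ∀ y ∈ Dom n 𝔞, (∑ i, ∑ j, a y i j * sd v1 y i j) = f y)
    (hint2 : ∀ y ∈ Dom n 𝔞, (∑ i, ∑ j, a y i j * sd v2 y i j) = f y)
    (hbc1 : ∀ y ∈ Bdy n 𝔞,
      (∑ i, b y i * (ξ i + fderiv ℝ v1 y (Pi.single i (1 : ℝ)))) + γ1 = g y)
    (hbc2 : ∀ y ∈ Bdy n 𝔞,
      (∑ i, b y i * (ξ i + fderiv ℝ v2 y (Pi.single i (1 : ℝ)))) + γ2 = g y)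
    -- strong maximum principle for a_{ij}D_{ij} on the periodic perforated domain
    (hSMP : ∀ w : (Fin n → ℝ) → ℝ, ContDiff ℝ 2 w →
      (∀ (m : Fin n → ℤ) (y : Fin n → ℝ), w (fun i => y i + (m i : ℝ)) = w y) →
      (∀ y ∈ Dom n 𝔞, (∑ i, ∑ j, a y i j * sd w y i j) = 0) →
      ∀ y₀ ∈ Dom n 𝔞, (∀ y ∈ Dom n 𝔞, w y ≤ w y₀) → ∀ y ∈ Dom n 𝔞, w y = w y₀)
    -- Hopf boundary lemma for a_{ij}D_{ij} at boundary maximum points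
    (hHopf : ∀ w : (Fin n → ℝ) → ℝ, ContDiff ℝ 2 w →
      (∀ (m : Fin n → ℤ) (y : Fin n → ℝ), w (fun i => y i + (m i : ℝ)) = w y) →
      (∀ y ∈ Dom n 𝔞, (∑ i, ∑ j, a y i j * sd w y i j) = 0) →
      ∀ y₀ ∈ Bdy n 𝔞, (∀ y ∈ Dom n 𝔞 ∪ Bdy n 𝔞, w y ≤ w y₀) →
      (¬ ∀ y ∈ Dom n 𝔞, w y = w y₀) →
      ∀ m : Fin n → ℤ, (∑ i, (y₀ i - (m i : ℝ)) ^ 2) = 𝔞 ^ 2 →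
      0 < ∑ i, fderiv ℝ w y₀ (Pi.single i (1 : ℝ)) * (((m i : ℝ) - y₀ i) / 𝔞)) :
    γ1 = γ2 := by
  classical
  -- the difference functions
  set w12 : (Fin n → ℝ) → ℝ := fun y => v1 y - v2 y with hw12
  set w21 : (Fin n → ℝ) → ℝ := fun y => v2 y - v1 y with hw21
  have hCw12 : ContDiff ℝ 2 w12 := hC1.sub hC2
  have hCw21 : ContDiff ℝ 2 w21 := hC2.sub hC1
  have hperw12 : ∀ (m : Fin n → ℤ) (y : Fin n → ℝ), w12 (fun i => y i + (m i : ℝ)) = w12 y := by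
    intro m y; simp only [hw12]; rw [hper1, hper2]
  have hperw21 : ∀ (m : Fin n → ℤ) (y : Fin n → ℝ), w21 (fun i => y i + (m i : ℝ)) = w21 y := by
    intro m y; simp only [hw21]; rw [hper1, hper2]
  have hint12 : ∀ y ∈ Dom n 𝔞, (∑ i, ∑ j, a y i j * sd w12 y i j) = 0 := by
    intro y hy
    have : ∀ i ∈ Finset.univ, ∀ j ∈ Finset.univ,
        a y i j * sd w12 y i j = a y i j * sd v1 y i j - a y i j * sd v2 y i j := by
      intro i _ j _; rw [hw12, sd_sub hC1 hC2]; ring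
    calc (∑ i, ∑ j, a y i j * sd w12 y i j)
        = ∑ i, ∑ j, (a y i j * sd v1 y i j - a y i j * sd v2 y i j) :=
          Finset.sum_congr rfl fun i hi => Finset.sum_congr rfl fun j hj => this i hi j hj
      _ = (∑ i, ∑ j, a y i j * sd v1 y i j) - (∑ i, ∑ j, a y i j * sd v2 y i j) := by
          simp [Finset.sum_sub_distrib]
      _ = 0 := by rw [hint1 y hy, hint2 y hy, sub_self]
  have hint21 : ∀ y ∈ Dom n 𝔞, (∑ i, ∑ j, a y i j * sd w21 y i j) = 0 := by
    intro y hy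
    have : ∀ i ∈ Finset.univ, ∀ j ∈ Finset.univ,
        a y i j * sd w21 y i j = a y i j * sd v2 y i j - a y i j * sd v1 y i j := by
      intro i _ j _; rw [hw21, sd_sub hC2 hC1]; ring
    calc (∑ i, ∑ j, a y i j * sd w21 y i j)
        = ∑ i, ∑ j, (a y i j * sd v2 y i j - a y i j * sd v1 y i j) :=
          Finset.sum_congr rfl fun i hi => Finset.sum_congr rfl fun j hj => this i hi j hj
      _ = (∑ i, ∑ j, a y i j * sd v2 y i j) - (∑ i, ∑ j, a y i j * sd v1 y i j) := by
          simp [Finset.sum_sub_distrib]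
      _ = 0 := by rw [hint1 y hy, hint2 y hy, sub_self]
  have hbw12 : ∀ y ∈ Bdy n 𝔞,
      ∑ i, b y i * fderiv ℝ w12 y (Pi.single i (1:ℝ)) = γ2 - γ1 := by
    intro y hy
    have h1 := hbc1 y hy
    have h2 := hbc2 y hy
    have hsum : ∑ i, b y i * fderiv ℝ w12 y (Pi.single i (1:ℝ))
        = (∑ i, b y i * (ξ i + fderiv ℝ v1 y (Pi.single i (1:ℝ))))
          - (∑ i, b y i * (ξ i + fderiv ℝ v2 y (Pi.single i (1:ℝ)))) := by
      rw [← Finset.sum_sub_distrib]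
      refine Finset.sum_congr rfl fun i _ => ?_
      rw [hw12, fderiv_sub' hC1 hC2 y, ContinuousLinearMap.sub_apply]
      ring
    rw [hsum]; linarith
  have hbw21 : ∀ y ∈ Bdy n 𝔞,
      ∑ i, b y i * fderiv ℝ w21 y (Pi.single i (1:ℝ)) = γ1 - γ2 := by
    intro y hy
    have h1 := hbc1 y hy
    have h2 := hbc2 y hy
    have hsum : ∑ i, b y i * fderiv ℝ w21 y (Pi.single i (1:ℝ))
        = (∑ i, b y i * (ξ i + fderiv ℝ v2 y (Pi.single i (1:ℝ))))
          - (∑ i, b y i * (ξ i + fderiv ℝ v1 y (Pi.single i (1:ℝ)))) := by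
      rw [← Finset.sum_sub_distrib]
      refine Finset.sum_congr rfl fun i _ => ?_
      rw [hw21, fderiv_sub' hC2 hC1 y, ContinuousLinearMap.sub_apply]
      ring
    rw [hsum]; linarith
  have hDomNe : (Dom n 𝔞).Nonempty := hconn.nonempty
  have hKne : (K n 𝔞).Nonempty := by
    obtain ⟨y, hy⟩ := hDomNe
    exact ⟨y, fun m => (hy m).le⟩
  by_cases hc : ∃ c, ∀ y ∈ Dom n 𝔞, w12 y = c
  · -- constant case: the gradient of `w12` vanishes at a boundary point
    obtain ⟨c, hcc⟩ := hc
    have hn : n ≠ 0 := by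
      rintro rfl
      obtain ⟨y, hy⟩ := hDomNe
      have h0 := hy 0
      simp at h0
      nlinarith
    have hnpos : 0 < n := Nat.pos_of_ne_zero hn
    set i0 : Fin n := ⟨0, hnpos⟩ with hi0
    set yb : Fin n → ℝ := fun i => if i = i0 then 𝔞 else 0 with hyb
    have hqb : ∑ i, (yb i - (((0 : Fin n → ℤ)) i : ℝ)) ^ 2 = 𝔞 ^ 2 := by
      rw [Finset.sum_eq_single i0]
      · simp [hyb]
      · intro j _ hj; simp [hyb, hj]
      · simp
    have hybB : yb ∈ Bdy n 𝔞 := ⟨⟨0, hqb⟩, sphere_subset_K ha ha2 0 hqb⟩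
    set δ0 : ℝ := 1/2 - 𝔞 with hδ0
    have hδpos : 0 < δ0 := by rw [hδ0]; linarith
    set U : Set (Fin n → ℝ) := {y | 𝔞^2 < ∑ i, (y i)^2} ∩ Metric.ball yb δ0 with hU
    have hUopen : IsOpen U :=
      (isOpen_lt continuous_const
        (continuous_finset_sum _ fun i _ => (continuous_apply i).pow 2)).inter
        Metric.isOpen_ball
    have hybabs : ∀ i, |yb i| ≤ 𝔞 := by
      intro i; rw [hyb]
      by_cases h : i = i0 <;> simp [h, abs_of_pos ha, ha.le]
    have hUD : U ⊆ Dom n 𝔞 := by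
      rintro y ⟨h1, h2⟩ m
      by_cases hm : m = 0
      · subst hm; simpa using h1
      · obtain ⟨i, hi⟩ : ∃ i, m i ≠ 0 := by
          by_contra hcon; push_neg at hcon; exact hm (funext hcon)
        have hdi : dist (y i) (yb i) ≤ dist y yb := dist_le_pi_dist y yb i
        have hball : dist y yb < δ0 := h2
        have hyi : |y i| < 1/2 := by
          have hlt : |y i - yb i| < δ0 := by
            rw [← Real.dist_eq]; exact lt_of_le_of_lt hdi hball
          have h3 := hybabs i
          calc |y i| = |y i - yb i + yb i| := by ring_nf
            _ ≤ |y i - yb i| + |yb i| := abs_add_le _ _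
            _ < δ0 + 𝔞 := by linarith
            _ = 1/2 := by rw [hδ0]; ring
        have hmi : (1:ℝ) ≤ |(m i : ℝ)| := by exact_mod_cast Int.one_le_abs hi
        have hterm : 𝔞^2 < (y i - (m i:ℝ))^2 := by
          have habs : 1/2 ≤ |y i - (m i:ℝ)| := by
            calc (1:ℝ)/2 ≤ |(m i:ℝ)| - |y i| := by linarith
              _ ≤ |(m i : ℝ) - y i| := abs_sub_abs_le_abs_sub _ _
              _ = |y i - (m i:ℝ)| := abs_sub_comm _ _
          nlinarith [sq_abs (y i - (m i:ℝ)), abs_nonneg (y i - (m i:ℝ))]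
        calc 𝔞^2 < (y i - (m i:ℝ))^2 := hterm
          _ ≤ ∑ j, (y j - (m j:ℝ))^2 :=
            Finset.single_le_sum (f := fun j => (y j - (m j:ℝ))^2)
              (fun j _ => sq_nonneg _) (Finset.mem_univ i)
    have hclosU : yb ∈ closure U := by
      have hεpos : ∀ k : ℕ, 0 < δ0/((k:ℝ)+2) := by
        intro k; positivity
      have hseq : Filter.Tendsto
          (fun k : ℕ => (fun i => if i = i0 then 𝔞 + δ0/((k:ℝ)+2) else 0 : Fin n → ℝ))
          Filter.atTop (𝓝 yb) := by
        rw [tendsto_pi_nhds]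
        intro i
        by_cases h : i = i0
        · have hT : Filter.Tendsto (fun k : ℕ => 𝔞 + δ0/((k:ℝ)+2)) Filter.atTop (𝓝 (𝔞 + 0)) :=
            tendsto_const_nhds.add (Filter.Tendsto.div_atTop tendsto_const_nhds
              (Filter.tendsto_atTop_add_const_right _ 2 tendsto_natCast_atTop_atTop))
          simpa [h, hyb] using hT
        · simpa [h, hyb] using (tendsto_const_nhds :
            Filter.Tendsto (fun _ : ℕ => (0:ℝ)) Filter.atTop (𝓝 0))
      refine mem_closure_of_tendsto hseq (Filter.Eventually.of_forall fun k => ?_)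
      constructor
      · have hsum : ∑ i, ((if i = i0 then 𝔞 + δ0/((k:ℝ)+2) else 0 : ℝ)) ^ 2
            = (𝔞 + δ0/((k:ℝ)+2))^2 := by
          rw [Finset.sum_eq_single i0]
          · simp
          · intro j _ hj; simp [hj]
          · simp
        show 𝔞^2 < ∑ i, ((if i = i0 then 𝔞 + δ0/((k:ℝ)+2) else 0 : ℝ)) ^ 2
        rw [hsum]
        nlinarith [hεpos k]
      · rw [Metric.mem_ball, dist_pi_lt_iff hδpos]
        intro i
        by_cases h : i = i0
        · subst h
          have heq1 : (if i0 = i0 then 𝔞 + δ0/((k:ℝ)+2) else 0) = 𝔞 + δ0/((k:ℝ)+2) :=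
            if_pos rfl
          have heq2 : yb i0 = 𝔞 := by simp [hyb]
          rw [heq1, heq2, Real.dist_eq]
          have habs : |𝔞 + δ0/((k:ℝ)+2) - 𝔞| = δ0/((k:ℝ)+2) := by
            rw [show 𝔞 + δ0/((k:ℝ)+2) - 𝔞 = δ0/((k:ℝ)+2) by ring, abs_of_pos (hεpos k)]
          rw [habs]
          have hk0 : (0:ℝ) ≤ (k:ℝ) := Nat.cast_nonneg k
          rw [div_lt_iff₀ (by linarith : (0:ℝ) < (k:ℝ)+2)]
          nlinarith
        · have heq3 : yb i = 0 := by simp [hyb, h]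
          rw [if_neg h, heq3]
          simpa using hδpos
    have hfd0 : U ⊆ {y : Fin n → ℝ | fderiv ℝ w12 y = 0} := by
      intro y hy
      have hev : w12 =ᶠ[𝓝 y] fun _ => c :=
        Filter.eventuallyEq_of_mem (hUopen.mem_nhds hy) (fun z hz => hcc z (hUD hz))
      show fderiv ℝ w12 y = 0
      rw [hev.fderiv_eq, fderiv_fun_const]
      rfl
    have hclosed : IsClosed {y : Fin n → ℝ | fderiv ℝ w12 y = 0} :=
      isClosed_eq (hCw12.continuous_fderiv (by norm_num)) continuous_const
    have hfdyb : fderiv ℝ w12 yb = 0 := (hclosed.closure_subset_iff.mpr hfd0) hclosU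
    have hfin := hbw12 yb hybB
    rw [hfdyb] at hfin
    simp at hfin
    linarith
  · -- non-constant case
    have hnc21 : ¬ ∃ c, ∀ y ∈ Dom n 𝔞, w21 y = c := by
      rintro ⟨c, hcc⟩
      exact hc ⟨-c, fun y hy => by have := hcc y hy; simp only [hw12, hw21] at *; linarith⟩
    have h12 := key 𝔞 μ (γ2 - γ1) ha ha2 hμ a b hobl w12 hCw12 hperw12 hint12
      (fun h => hSMP w12 hCw12 hperw12 h) (fun h => hHopf w12 hCw12 hperw12 h) hc hKne hbw12
    have h21 := key 𝔞 μ (γ1 - γ2) ha ha2 hμ a b hobl w21 hCw21 hperw21 hint21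
      (fun h => hSMP w21 hCw21 hperw21 h) (fun h => hHopf w21 hCw21 hperw21 h) hnc21 hKne hbw21
    linarith
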